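/- For all positive integers n₁, n₂, n₃, one has τ(n₁n₂n₃) = Σ μ(d₁d₂)μ(d₃) / (2^{ω(gcd(d₁,n₁))+ω(gcd(d₂,n₂))}) · τ(n₁/(d₂d₃)) τ(n₂/(d₁d₃)) τ(n₃/(d₁d₂)), where the sum is over triples (d₁,d₂,d₃) of positive integers with d_i d_j | n_k for all permutations {i,j,k} = {1,2,3}. -/

import Mathlib

open ArithmeticFunction Finset in
noncomputable def Faux (n₁ n₂ n₃ : ℕ) : ℚ :=
  ∑ d₁ ∈ (Nat.gcd n₂ n₃).divisors, ∑ d₂ ∈ (Nat.gcd n₁ n₃).divisors,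
    ∑ d₃ ∈ (Nat.gcd n₁ n₂).divisors,
      if d₂ * d₃ ∣ n₁ ∧ d₁ * d₃ ∣ n₂ ∧ d₁ * d₂ ∣ n₃ then
        ((moebius (d₁ * d₂) : ℚ) * (moebius d₃ : ℚ) /
            2 ^ ((Nat.gcd d₁ n₁).primeFactors.card + (Nat.gcd d₂ n₂).primeFactors.card)) *
          (((n₁ / (d₂ * d₃)).divisors.card : ℚ) *
            (((n₂ / (d₁ * d₃)).divisors.card : ℚ) * ((n₃ / (d₁ * d₂)).divisors.card : ℚ)))
      else 0

lemma aux_gcd_pow (p b c : ℕ) : Nat.gcd (p ^ b) (p ^ c) = p ^ (min b c) := by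
  rcases le_total b c with h | h
  · rw [min_eq_left h, Nat.gcd_eq_left (pow_dvd_pow p h)]
  · rw [min_eq_right h, Nat.gcd_eq_right (pow_dvd_pow p h)]

lemma aux_sum_range (f : ℕ → ℚ) (k : ℕ) (h : ∀ i, 2 ≤ i → f i = 0) :
    ∑ i ∈ Finset.range (k + 1), f i = f 0 + if 1 ≤ k then f 1 else 0 := by
  induction k with
  | zero => simp
  | succ k ih =>
      rw [Finset.sum_range_succ, ih]
      rcases Nat.eq_zero_or_pos k with rfl | hk
      · simp
      · rw [h (k + 1) (by omega), if_pos (show 1 ≤ k from hk), if_pos (show 1 ≤ k + 1 by omega), add_zero]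

lemma aux_card_divisors_pp {p : ℕ} (hp : p.Prime) (k : ℕ) :
    ((p ^ k).divisors.card : ℚ) = k + 1 := by
  rw [Nat.divisors_prime_pow hp, Finset.card_map, Finset.card_range]
  push_cast; ring

open Finset in
lemma aux_sum_divisors_coprime {M : Type*} [AddCommMonoid M] {m n : ℕ} (hm : m ≠ 0) (hn : n ≠ 0)
    (h : Nat.Coprime m n) (f : ℕ → M) :
    ∑ d ∈ (m * n).divisors, f d = ∑ a ∈ m.divisors, ∑ b ∈ n.divisors, f (a * b) := by
  rw [← Finset.sum_product']
  refine Finset.sum_nbij' (fun d => (Nat.gcd d m, Nat.gcd d n)) (fun p => p.1 * p.2) ?_ ?_ ?_ ?_ ?_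
  · intro d hd
    simp only [Nat.mem_divisors, Finset.mem_product]
    exact ⟨⟨Nat.gcd_dvd_right _ _, hm⟩, ⟨Nat.gcd_dvd_right _ _, hn⟩⟩
  · intro p hp
    simp only [Finset.mem_product, Nat.mem_divisors] at hp
    exact Nat.mem_divisors.2 ⟨mul_dvd_mul hp.1.1 hp.2.1, mul_ne_zero hm hn⟩
  · intro d hd
    exact (Nat.gcd_mul_gcd_eq_iff_dvd_mul_of_coprime h).2 (Nat.dvd_of_mem_divisors hd)
  · intro p hp
    simp only [Finset.mem_product, Nat.mem_divisors] at hp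
    have h1 : Nat.Coprime p.2 m := Nat.Coprime.coprime_dvd_left hp.2.1 h.symm
    have h2 : Nat.Coprime p.1 n := Nat.Coprime.coprime_dvd_left hp.1.1 h
    have e1 : Nat.gcd (p.1 * p.2) m = p.1 := by
      rw [mul_comm, Nat.Coprime.gcd_mul_left_cancel _ h1, Nat.gcd_eq_left hp.1.1]
    have e2 : Nat.gcd (p.1 * p.2) n = p.2 := by
      rw [Nat.Coprime.gcd_mul_left_cancel _ h2, Nat.gcd_eq_left hp.2.1]
    rw [e1, e2]
  · intro d hd
    rw [(Nat.gcd_mul_gcd_eq_iff_dvd_mul_of_coprime h).2 (Nat.dvd_of_mem_divisors hd)]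

lemma aux_dvd_split {x y u v : ℕ} (hxv : Nat.Coprime x v) (hyu : Nat.Coprime y u) :
    x * y ∣ u * v ↔ x ∣ u ∧ y ∣ v := by
  constructor
  · intro H
    exact ⟨hxv.dvd_of_dvd_mul_right ((dvd_mul_right x y).trans H),
      hyu.dvd_of_dvd_mul_left ((dvd_mul_left y x).trans H)⟩
  · exact fun ⟨h1, h2⟩ => mul_dvd_mul h1 h2

lemma aux_card_pf_mul {a b : ℕ} (ha : a ≠ 0) (hb : b ≠ 0) (h : a.Coprime b) :
    (a * b).primeFactors.card = a.primeFactors.card + b.primeFactors.card := by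
  rw [Nat.primeFactors_mul ha hb,
    Finset.card_union_of_disjoint ((Nat.disjoint_primeFactors ha hb).2 h)]

lemma aux_gcd_mul_split {e f u v : ℕ} (hev : Nat.Coprime e v) (hfu : Nat.Coprime f u)
    (huv : Nat.Coprime u v) :
    Nat.gcd (e * f) (u * v) = Nat.gcd e u * Nat.gcd f v := by
  rw [Nat.Coprime.gcd_mul _ huv, Nat.Coprime.gcd_mul_right_cancel e hfu,
    mul_comm e f, Nat.Coprime.gcd_mul_right_cancel f hev]

open ArithmeticFunction in
lemma term_split {n₁ n₂ n₃ m₁ m₂ m₃ e₁ e₂ e₃ f₁ f₂ f₃ : ℕ}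
    (h₁ : n₁ ≠ 0) (h₂ : n₂ ≠ 0) (h₃ : n₃ ≠ 0) (k₁ : m₁ ≠ 0) (k₂ : m₂ ≠ 0) (k₃ : m₃ ≠ 0)
    (h : Nat.Coprime (n₁ * n₂ * n₃) (m₁ * m₂ * m₃))
    (he₁ : e₁ ∣ Nat.gcd n₂ n₃) (he₂ : e₂ ∣ Nat.gcd n₁ n₃) (he₃ : e₃ ∣ Nat.gcd n₁ n₂)
    (hf₁ : f₁ ∣ Nat.gcd m₂ m₃) (hf₂ : f₂ ∣ Nat.gcd m₁ m₃) (hf₃ : f₃ ∣ Nat.gcd m₁ m₂) :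
    (if (e₂ * f₂) * (e₃ * f₃) ∣ n₁ * m₁ ∧ (e₁ * f₁) * (e₃ * f₃) ∣ n₂ * m₂ ∧
        (e₁ * f₁) * (e₂ * f₂) ∣ n₃ * m₃ then
      ((moebius ((e₁ * f₁) * (e₂ * f₂)) : ℚ) * (moebius (e₃ * f₃) : ℚ) /
          2 ^ ((Nat.gcd (e₁ * f₁) (n₁ * m₁)).primeFactors.card +
            (Nat.gcd (e₂ * f₂) (n₂ * m₂)).primeFactors.card)) *
        (((n₁ * m₁ / ((e₂ * f₂) * (e₃ * f₃))).divisors.card : ℚ) *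
          (((n₂ * m₂ / ((e₁ * f₁) * (e₃ * f₃))).divisors.card : ℚ) *
            ((n₃ * m₃ / ((e₁ * f₁) * (e₂ * f₂))).divisors.card : ℚ)))
     else 0) =
    (if e₂ * e₃ ∣ n₁ ∧ e₁ * e₃ ∣ n₂ ∧ e₁ * e₂ ∣ n₃ then
      ((moebius (e₁ * e₂) : ℚ) * (moebius e₃ : ℚ) /
          2 ^ ((Nat.gcd e₁ n₁).primeFactors.card + (Nat.gcd e₂ n₂).primeFactors.card)) *
        (((n₁ / (e₂ * e₃)).divisors.card : ℚ) *
          (((n₂ / (e₁ * e₃)).divisors.card : ℚ) * ((n₃ / (e₁ * e₂)).divisors.card : ℚ)))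
     else 0) *
    (if f₂ * f₃ ∣ m₁ ∧ f₁ * f₃ ∣ m₂ ∧ f₁ * f₂ ∣ m₃ then
      ((moebius (f₁ * f₂) : ℚ) * (moebius f₃ : ℚ) /
          2 ^ ((Nat.gcd f₁ m₁).primeFactors.card + (Nat.gcd f₂ m₂).primeFactors.card)) *
        (((m₁ / (f₂ * f₃)).divisors.card : ℚ) *
          (((m₂ / (f₁ * f₃)).divisors.card : ℚ) * ((m₃ / (f₁ * f₂)).divisors.card : ℚ)))
     else 0) := by
  -- basic divisibilities into the big products
  have hn₁N : n₁ ∣ n₁ * n₂ * n₃ := ⟨n₂ * n₃, by ring⟩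
  have hn₂N : n₂ ∣ n₁ * n₂ * n₃ := ⟨n₁ * n₃, by ring⟩
  have hn₃N : n₃ ∣ n₁ * n₂ * n₃ := ⟨n₁ * n₂, by ring⟩
  have hm₁M : m₁ ∣ m₁ * m₂ * m₃ := ⟨m₂ * m₃, by ring⟩
  have hm₂M : m₂ ∣ m₁ * m₂ * m₃ := ⟨m₁ * m₃, by ring⟩
  have hm₃M : m₃ ∣ m₁ * m₂ * m₃ := ⟨m₁ * m₂, by ring⟩
  have copE : ∀ {x y : ℕ}, x ∣ n₁ * n₂ * n₃ → y ∣ m₁ * m₂ * m₃ → Nat.Coprime x y :=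
    fun hx hy => Nat.Coprime.coprime_dvd_left hx (Nat.Coprime.coprime_dvd_right hy h)
  have he₁n₂ : e₁ ∣ n₂ := he₁.trans (Nat.gcd_dvd_left _ _)
  have he₁n₃ : e₁ ∣ n₃ := he₁.trans (Nat.gcd_dvd_right _ _)
  have he₂n₁ : e₂ ∣ n₁ := he₂.trans (Nat.gcd_dvd_left _ _)
  have he₂n₃ : e₂ ∣ n₃ := he₂.trans (Nat.gcd_dvd_right _ _)
  have he₃n₁ : e₃ ∣ n₁ := he₃.trans (Nat.gcd_dvd_left _ _)
  have he₃n₂ : e₃ ∣ n₂ := he₃.trans (Nat.gcd_dvd_right _ _)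
  have hf₁m₂ : f₁ ∣ m₂ := hf₁.trans (Nat.gcd_dvd_left _ _)
  have hf₁m₃ : f₁ ∣ m₃ := hf₁.trans (Nat.gcd_dvd_right _ _)
  have hf₂m₁ : f₂ ∣ m₁ := hf₂.trans (Nat.gcd_dvd_left _ _)
  have hf₂m₃ : f₂ ∣ m₃ := hf₂.trans (Nat.gcd_dvd_right _ _)
  have hf₃m₁ : f₃ ∣ m₁ := hf₃.trans (Nat.gcd_dvd_left _ _)
  have hf₃m₂ : f₃ ∣ m₂ := hf₃.trans (Nat.gcd_dvd_right _ _)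
  have he₁N : e₁ ∣ n₁ * n₂ * n₃ := he₁n₂.trans hn₂N
  have he₂N : e₂ ∣ n₁ * n₂ * n₃ := he₂n₁.trans hn₁N
  have he₃N : e₃ ∣ n₁ * n₂ * n₃ := he₃n₁.trans hn₁N
  have hf₁M : f₁ ∣ m₁ * m₂ * m₃ := hf₁m₂.trans hm₂M
  have hf₂M : f₂ ∣ m₁ * m₂ * m₃ := hf₂m₁.trans hm₁M
  have hf₃M : f₃ ∣ m₁ * m₂ * m₃ := hf₃m₁.trans hm₁M
  have he₂₃N : e₂ * e₃ ∣ n₁ * n₂ * n₃ := (mul_dvd_mul he₂n₁ he₃n₂).trans ⟨n₃, by ring⟩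
  have he₁₃N : e₁ * e₃ ∣ n₁ * n₂ * n₃ := (mul_dvd_mul he₁n₂ he₃n₁).trans ⟨n₃, by ring⟩
  have he₁₂N : e₁ * e₂ ∣ n₁ * n₂ * n₃ := (mul_dvd_mul he₁n₂ he₂n₁).trans ⟨n₃, by ring⟩
  have hf₂₃M : f₂ * f₃ ∣ m₁ * m₂ * m₃ := (mul_dvd_mul hf₂m₁ hf₃m₂).trans ⟨m₃, by ring⟩
  have hf₁₃M : f₁ * f₃ ∣ m₁ * m₂ * m₃ := (mul_dvd_mul hf₁m₂ hf₃m₁).trans ⟨m₃, by ring⟩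
  have hf₁₂M : f₁ * f₂ ∣ m₁ * m₂ * m₃ := (mul_dvd_mul hf₁m₂ hf₂m₁).trans ⟨m₃, by ring⟩
  -- condition equivalences
  have c1 : (e₂ * f₂) * (e₃ * f₃) ∣ n₁ * m₁ ↔ (e₂ * e₃ ∣ n₁ ∧ f₂ * f₃ ∣ m₁) := by
    rw [show (e₂ * f₂) * (e₃ * f₃) = (e₂ * e₃) * (f₂ * f₃) by ring]
    exact aux_dvd_split (copE he₂₃N hm₁M) ((copE hn₁N hf₂₃M).symm)
  have c2 : (e₁ * f₁) * (e₃ * f₃) ∣ n₂ * m₂ ↔ (e₁ * e₃ ∣ n₂ ∧ f₁ * f₃ ∣ m₂) := by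
    rw [show (e₁ * f₁) * (e₃ * f₃) = (e₁ * e₃) * (f₁ * f₃) by ring]
    exact aux_dvd_split (copE he₁₃N hm₂M) ((copE hn₂N hf₁₃M).symm)
  have c3 : (e₁ * f₁) * (e₂ * f₂) ∣ n₃ * m₃ ↔ (e₁ * e₂ ∣ n₃ ∧ f₁ * f₂ ∣ m₃) := by
    rw [show (e₁ * f₁) * (e₂ * f₂) = (e₁ * e₂) * (f₁ * f₂) by ring]
    exact aux_dvd_split (copE he₁₂N hm₃M) ((copE hn₃N hf₁₂M).symm)
  rw [ite_zero_mul_ite_zero]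
  have hc : ((e₂ * f₂) * (e₃ * f₃) ∣ n₁ * m₁ ∧ (e₁ * f₁) * (e₃ * f₃) ∣ n₂ * m₂ ∧
      (e₁ * f₁) * (e₂ * f₂) ∣ n₃ * m₃) ↔
      ((e₂ * e₃ ∣ n₁ ∧ e₁ * e₃ ∣ n₂ ∧ e₁ * e₂ ∣ n₃) ∧
        (f₂ * f₃ ∣ m₁ ∧ f₁ * f₃ ∣ m₂ ∧ f₁ * f₂ ∣ m₃)) := by
    rw [c1, c2, c3]; tauto
  by_cases hP : (e₂ * e₃ ∣ n₁ ∧ e₁ * e₃ ∣ n₂ ∧ e₁ * e₂ ∣ n₃) ∧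
      (f₂ * f₃ ∣ m₁ ∧ f₁ * f₃ ∣ m₂ ∧ f₁ * f₂ ∣ m₃)
  · rw [if_pos (hc.mpr hP), if_pos hP]
    obtain ⟨⟨p1, p2, p3⟩, q1, q2, q3⟩ := hP
    -- moebius splittings
    have mu1 : moebius ((e₁ * f₁) * (e₂ * f₂)) = moebius (e₁ * e₂) * moebius (f₁ * f₂) := by
      rw [show (e₁ * f₁) * (e₂ * f₂) = (e₁ * e₂) * (f₁ * f₂) by ring]
      exact isMultiplicative_moebius.map_mul_of_coprime (copE he₁₂N hf₁₂M)
    have mu2 : moebius (e₃ * f₃) = moebius e₃ * moebius f₃ :=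
      isMultiplicative_moebius.map_mul_of_coprime (copE he₃N hf₃M)
    -- gcd splittings
    have g1 : Nat.gcd (e₁ * f₁) (n₁ * m₁) = Nat.gcd e₁ n₁ * Nat.gcd f₁ m₁ :=
      aux_gcd_mul_split (copE he₁N hm₁M) ((copE hn₁N hf₁M).symm) (copE hn₁N hm₁M)
    have g2 : Nat.gcd (e₂ * f₂) (n₂ * m₂) = Nat.gcd e₂ n₂ * Nat.gcd f₂ m₂ :=
      aux_gcd_mul_split (copE he₂N hm₂M) ((copE hn₂N hf₂M).symm) (copE hn₂N hm₂M)
    have g1' : (Nat.gcd e₁ n₁ * Nat.gcd f₁ m₁).primeFactors.card =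
        (Nat.gcd e₁ n₁).primeFactors.card + (Nat.gcd f₁ m₁).primeFactors.card :=
      aux_card_pf_mul (Nat.gcd_ne_zero_right h₁) (Nat.gcd_ne_zero_right k₁)
        (copE ((Nat.gcd_dvd_right _ _).trans hn₁N) ((Nat.gcd_dvd_right _ _).trans hm₁M))
    have g2' : (Nat.gcd e₂ n₂ * Nat.gcd f₂ m₂).primeFactors.card =
        (Nat.gcd e₂ n₂).primeFactors.card + (Nat.gcd f₂ m₂).primeFactors.card :=
      aux_card_pf_mul (Nat.gcd_ne_zero_right h₂) (Nat.gcd_ne_zero_right k₂)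
        (copE ((Nat.gcd_dvd_right _ _).trans hn₂N) ((Nat.gcd_dvd_right _ _).trans hm₂M))
    -- division splittings
    have d1 : n₁ * m₁ / ((e₂ * f₂) * (e₃ * f₃)) = (n₁ / (e₂ * e₃)) * (m₁ / (f₂ * f₃)) := by
      rw [Nat.div_mul_div_comm p1 q1]; ring_nf
    have d2 : n₂ * m₂ / ((e₁ * f₁) * (e₃ * f₃)) = (n₂ / (e₁ * e₃)) * (m₂ / (f₁ * f₃)) := by
      rw [Nat.div_mul_div_comm p2 q2]; ring_nf
    have d3 : n₃ * m₃ / ((e₁ * f₁) * (e₂ * f₂)) = (n₃ / (e₁ * e₂)) * (m₃ / (f₁ * f₂)) := by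
      rw [Nat.div_mul_div_comm p3 q3]; ring_nf
    have t1 : ((n₁ / (e₂ * e₃)) * (m₁ / (f₂ * f₃))).divisors.card =
        (n₁ / (e₂ * e₃)).divisors.card * (m₁ / (f₂ * f₃)).divisors.card :=
      Nat.Coprime.card_divisors_mul
        (copE ((Nat.div_dvd_of_dvd p1).trans hn₁N) ((Nat.div_dvd_of_dvd q1).trans hm₁M))
    have t2 : ((n₂ / (e₁ * e₃)) * (m₂ / (f₁ * f₃))).divisors.card =
        (n₂ / (e₁ * e₃)).divisors.card * (m₂ / (f₁ * f₃)).divisors.card :=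
      Nat.Coprime.card_divisors_mul
        (copE ((Nat.div_dvd_of_dvd p2).trans hn₂N) ((Nat.div_dvd_of_dvd q2).trans hm₂M))
    have t3 : ((n₃ / (e₁ * e₂)) * (m₃ / (f₁ * f₂))).divisors.card =
        (n₃ / (e₁ * e₂)).divisors.card * (m₃ / (f₁ * f₂)).divisors.card :=
      Nat.Coprime.card_divisors_mul
        (copE ((Nat.div_dvd_of_dvd p3).trans hn₃N) ((Nat.div_dvd_of_dvd q3).trans hm₃M))
    rw [mu1, mu2, g1, g2, g1', g2', d1, d2, d3, t1, t2, t3]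
    push_cast
    rw [pow_add (2 : ℚ), pow_add (2 : ℚ), pow_add (2 : ℚ)]
    ring
  · rw [if_neg (fun hx => hP (hc.mp hx)), if_neg hP]

open ArithmeticFunction in
lemma Faux_mul {n₁ n₂ n₃ m₁ m₂ m₃ : ℕ} (h₁ : 0 < n₁) (h₂ : 0 < n₂) (h₃ : 0 < n₃)
    (k₁ : 0 < m₁) (k₂ : 0 < m₂) (k₃ : 0 < m₃)
    (h : Nat.Coprime (n₁ * n₂ * n₃) (m₁ * m₂ * m₃)) :
    Faux (n₁ * m₁) (n₂ * m₂) (n₃ * m₃) = Faux n₁ n₂ n₃ * Faux m₁ m₂ m₃ := by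
  have hn₁N : n₁ ∣ n₁ * n₂ * n₃ := ⟨n₂ * n₃, by ring⟩
  have hn₂N : n₂ ∣ n₁ * n₂ * n₃ := ⟨n₁ * n₃, by ring⟩
  have hn₃N : n₃ ∣ n₁ * n₂ * n₃ := ⟨n₁ * n₂, by ring⟩
  have hm₁M : m₁ ∣ m₁ * m₂ * m₃ := ⟨m₂ * m₃, by ring⟩
  have hm₂M : m₂ ∣ m₁ * m₂ * m₃ := ⟨m₁ * m₃, by ring⟩
  have hm₃M : m₃ ∣ m₁ * m₂ * m₃ := ⟨m₁ * m₂, by ring⟩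
  have copE : ∀ {x y : ℕ}, x ∣ n₁ * n₂ * n₃ → y ∣ m₁ * m₂ * m₃ → Nat.Coprime x y :=
    fun hx hy => Nat.Coprime.coprime_dvd_left hx (Nat.Coprime.coprime_dvd_right hy h)
  have G₁ : Nat.gcd (n₂ * m₂) (n₃ * m₃) = Nat.gcd n₂ n₃ * Nat.gcd m₂ m₃ :=
    aux_gcd_mul_split (copE hn₂N hm₃M) ((copE hn₃N hm₂M).symm) (copE hn₃N hm₃M)
  have G₂ : Nat.gcd (n₁ * m₁) (n₃ * m₃) = Nat.gcd n₁ n₃ * Nat.gcd m₁ m₃ :=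
    aux_gcd_mul_split (copE hn₁N hm₃M) ((copE hn₃N hm₁M).symm) (copE hn₃N hm₃M)
  have G₃ : Nat.gcd (n₁ * m₁) (n₂ * m₂) = Nat.gcd n₁ n₂ * Nat.gcd m₁ m₂ :=
    aux_gcd_mul_split (copE hn₁N hm₂M) ((copE hn₂N hm₁M).symm) (copE hn₂N hm₂M)
  have cg₁ : (Nat.gcd n₂ n₃).Coprime (Nat.gcd m₂ m₃) :=
    copE ((Nat.gcd_dvd_left _ _).trans hn₂N) ((Nat.gcd_dvd_left _ _).trans hm₂M)
  have cg₂ : (Nat.gcd n₁ n₃).Coprime (Nat.gcd m₁ m₃) :=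
    copE ((Nat.gcd_dvd_left _ _).trans hn₁N) ((Nat.gcd_dvd_left _ _).trans hm₁M)
  have cg₃ : (Nat.gcd n₁ n₂).Coprime (Nat.gcd m₁ m₂) :=
    copE ((Nat.gcd_dvd_left _ _).trans hn₁N) ((Nat.gcd_dvd_left _ _).trans hm₁M)
  unfold Faux
  rw [G₁, G₂, G₃]
  simp only [aux_sum_divisors_coprime (Nat.gcd_ne_zero_left h₂.ne') (Nat.gcd_ne_zero_left k₂.ne')
      cg₁,
    aux_sum_divisors_coprime (Nat.gcd_ne_zero_left h₁.ne') (Nat.gcd_ne_zero_left k₁.ne') cg₂,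
    aux_sum_divisors_coprime (Nat.gcd_ne_zero_left h₁.ne') (Nat.gcd_ne_zero_left k₁.ne') cg₃,
    Finset.sum_mul_sum]
  refine Finset.sum_congr rfl fun e₁ he₁ => Finset.sum_congr rfl fun f₁ hf₁ =>
    Finset.sum_congr rfl fun e₂ he₂ => Finset.sum_congr rfl fun f₂ hf₂ =>
    Finset.sum_congr rfl fun e₃ he₃ => Finset.sum_congr rfl fun f₃ hf₃ => ?_
  exact term_split h₁.ne' h₂.ne' h₃.ne' k₁.ne' k₂.ne' k₃.ne' h
    (Nat.dvd_of_mem_divisors he₁) (Nat.dvd_of_mem_divisors he₂) (Nat.dvd_of_mem_divisors he₃)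
    (Nat.dvd_of_mem_divisors hf₁) (Nat.dvd_of_mem_divisors hf₂) (Nat.dvd_of_mem_divisors hf₃)

open ArithmeticFunction in
noncomputable def Tpp (p a b c i j k : ℕ) : ℚ :=
  if p ^ j * p ^ k ∣ p ^ a ∧ p ^ i * p ^ k ∣ p ^ b ∧ p ^ i * p ^ j ∣ p ^ c then
    ((moebius (p ^ i * p ^ j) : ℚ) * (moebius (p ^ k) : ℚ) /
        2 ^ ((Nat.gcd (p ^ i) (p ^ a)).primeFactors.card +
          (Nat.gcd (p ^ j) (p ^ b)).primeFactors.card)) *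
      (((p ^ a / (p ^ j * p ^ k)).divisors.card : ℚ) *
        (((p ^ b / (p ^ i * p ^ k)).divisors.card : ℚ) *
          ((p ^ c / (p ^ i * p ^ j)).divisors.card : ℚ)))
  else 0

open ArithmeticFunction in
lemma aux_moebius_zero {p : ℕ} (hp : p.Prime) {n : ℕ} (h : p * p ∣ n) :
    (moebius n : ℚ) = 0 := by
  rw [moebius_eq_zero_of_not_squarefree (fun hs => hp.not_isUnit (hs p h))]
  norm_num

lemma Tpp_zero₁ {p : ℕ} (hp : p.Prime) (a b c i j k : ℕ) (hi : 2 ≤ i) :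
    Tpp p a b c i j k = 0 := by
  have h : p * p ∣ p ^ i * p ^ j :=
    dvd_mul_of_dvd_left (by rw [← sq]; exact pow_dvd_pow p hi) _
  unfold Tpp
  split
  · rw [aux_moebius_zero hp h]; ring
  · rfl

lemma Tpp_zero₂ {p : ℕ} (hp : p.Prime) (a b c i j k : ℕ) (hj : 2 ≤ j) :
    Tpp p a b c i j k = 0 := by
  have h : p * p ∣ p ^ i * p ^ j :=
    dvd_mul_of_dvd_right (by rw [← sq]; exact pow_dvd_pow p hj) _
  unfold Tpp
  split
  · rw [aux_moebius_zero hp h]; ring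
  · rfl

lemma Tpp_zero₃ {p : ℕ} (hp : p.Prime) (a b c i j k : ℕ) (hk : 2 ≤ k) :
    Tpp p a b c i j k = 0 := by
  have h : p * p ∣ p ^ k := by rw [← sq]; exact pow_dvd_pow p hk
  unfold Tpp
  split
  · rw [aux_moebius_zero hp h]; ring
  · rfl

lemma Faux_pp_reduce {p : ℕ} (hp : p.Prime) (a b c : ℕ) :
    Faux (p ^ a) (p ^ b) (p ^ c) =
      ((Tpp p a b c 0 0 0 + if 1 ≤ min a b then Tpp p a b c 0 0 1 else 0) +
        if 1 ≤ min a c then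
          Tpp p a b c 0 1 0 + if 1 ≤ min a b then Tpp p a b c 0 1 1 else 0
        else 0) +
      if 1 ≤ min b c then
        (Tpp p a b c 1 0 0 + if 1 ≤ min a b then Tpp p a b c 1 0 1 else 0) +
          if 1 ≤ min a c then
            Tpp p a b c 1 1 0 + if 1 ≤ min a b then Tpp p a b c 1 1 1 else 0
          else 0
      else 0 := by
  have hred : Faux (p ^ a) (p ^ b) (p ^ c) =
      ∑ i ∈ Finset.range (min b c + 1), ∑ j ∈ Finset.range (min a c + 1),
        ∑ k ∈ Finset.range (min a b + 1), Tpp p a b c i j k := by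
    simp only [Faux, aux_gcd_pow, Nat.sum_divisors_prime_pow hp, Tpp]
  have hk : ∀ i j, ∑ k ∈ Finset.range (min a b + 1), Tpp p a b c i j k =
      Tpp p a b c i j 0 + if 1 ≤ min a b then Tpp p a b c i j 1 else 0 :=
    fun i j => aux_sum_range _ _ (fun k h => Tpp_zero₃ hp a b c i j k h)
  have hj : ∀ i, ∑ j ∈ Finset.range (min a c + 1),
        ∑ k ∈ Finset.range (min a b + 1), Tpp p a b c i j k =
      (Tpp p a b c i 0 0 + if 1 ≤ min a b then Tpp p a b c i 0 1 else 0) +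
        if 1 ≤ min a c then
          Tpp p a b c i 1 0 + if 1 ≤ min a b then Tpp p a b c i 1 1 else 0
        else 0 := by
    intro i
    rw [aux_sum_range _ _ (fun j h => Finset.sum_eq_zero
      (fun k _ => Tpp_zero₂ hp a b c i j k h)), hk i 0, hk i 1]
  rw [hred, aux_sum_range _ _ (fun i h => Finset.sum_eq_zero (fun j _ =>
    Finset.sum_eq_zero (fun k _ => Tpp_zero₁ hp a b c i j k h))), hj 0, hj 1]

open ArithmeticFunction in
lemma aux_moebius_pp {p : ℕ} (hp : p.Prime) (m : ℕ) :
    (moebius (p ^ m) : ℚ) = if m = 0 then 1 else if m = 1 then -1 else 0 := by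
  rcases m with _ | _ | m
  · simp
  · simp [moebius_apply_prime hp]
  · rw [aux_moebius_zero hp (by rw [← sq]; exact pow_dvd_pow p (by omega))]
    simp

lemma aux_card_pf_pp {p : ℕ} (hp : p.Prime) {m : ℕ} (hm : m ≤ 1) :
    (p ^ m).primeFactors.card = m := by
  interval_cases m
  · simp
  · rw [pow_one, hp.primeFactors]; simp

lemma Tpp_eval {p : ℕ} (hp : p.Prime) (a b c i j k : ℕ) (hi : i ≤ 1) (hj : j ≤ 1) (hk : k ≤ 1) :
    Tpp p a b c i j k =
      if j + k ≤ a ∧ i + k ≤ b ∧ i + j ≤ c then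
        ((if i + j = 0 then (1 : ℚ) else if i + j = 1 then -1 else 0) *
            (if k = 0 then 1 else -1) / 2 ^ (min i a + min j b)) *
          ((((a - (j + k) : ℕ) : ℚ) + 1) *
            ((((b - (i + k) : ℕ) : ℚ) + 1) * (((c - (i + j) : ℕ) : ℚ) + 1)))
      else 0 := by
  unfold Tpp
  simp only [← pow_add, Nat.pow_dvd_pow_iff_le_right hp.one_lt]
  by_cases h : j + k ≤ a ∧ i + k ≤ b ∧ i + j ≤ c
  · rw [if_pos h, if_pos h, Nat.pow_div h.1 hp.pos, Nat.pow_div h.2.1 hp.pos,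
      Nat.pow_div h.2.2 hp.pos, aux_card_divisors_pp hp, aux_card_divisors_pp hp,
      aux_card_divisors_pp hp, aux_gcd_pow, aux_gcd_pow,
      aux_card_pf_pp hp (le_trans (Nat.min_le_left i a) hi),
      aux_card_pf_pp hp (le_trans (Nat.min_le_left j b) hj),
      aux_moebius_pp hp, aux_moebius_pp hp]
    have hk' : (if k = 0 then (1 : ℚ) else if k = 1 then -1 else 0) =
        (if k = 0 then 1 else -1) := by
      interval_cases k <;> norm_num
    rw [hk']
  · rw [if_neg h, if_neg h]

open ArithmeticFunction in
lemma Faux_pp {p : ℕ} (hp : p.Prime) (a b c : ℕ) :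
    Faux (p ^ a) (p ^ b) (p ^ c) = (a : ℚ) + b + c + 1 := by
  rw [Faux_pp_reduce hp,
    Tpp_eval hp a b c 0 0 0 (by omega) (by omega) (by omega),
    Tpp_eval hp a b c 0 0 1 (by omega) (by omega) (by omega),
    Tpp_eval hp a b c 0 1 0 (by omega) (by omega) (by omega),
    Tpp_eval hp a b c 0 1 1 (by omega) (by omega) (by omega),
    Tpp_eval hp a b c 1 0 0 (by omega) (by omega) (by omega),
    Tpp_eval hp a b c 1 0 1 (by omega) (by omega) (by omega),
    Tpp_eval hp a b c 1 1 0 (by omega) (by omega) (by omega),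
    Tpp_eval hp a b c 1 1 1 (by omega) (by omega) (by omega)]
  norm_num
  rcases a with _ | _ | a <;> rcases b with _ | _ | b <;> rcases c with _ | _ | c <;>
    norm_num [Nat.min_def] <;> push_cast <;> ring

lemma Faux_one : Faux 1 1 1 = 1 := by
  norm_num [Faux, Nat.divisors_one]

lemma Faux_key : ∀ N n₁ n₂ n₃ : ℕ, 0 < n₁ → 0 < n₂ → 0 < n₃ → n₁ * n₂ * n₃ = N →
    ((n₁ * n₂ * n₃).divisors.card : ℚ) = Faux n₁ n₂ n₃ := by
  intro N
  induction N using Nat.strong_induction_on with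
  | _ N ih =>
    intro n₁ n₂ n₃ h₁ h₂ h₃ hN
    rcases eq_or_ne N 1 with rfl | hN1
    · obtain ⟨⟨rfl, rfl⟩, rfl⟩ : (n₁ = 1 ∧ n₂ = 1) ∧ n₃ = 1 := by
        have ha := Nat.eq_one_of_mul_eq_one_right hN
        have hb := Nat.eq_one_of_mul_eq_one_left hN
        have hc := Nat.eq_one_of_mul_eq_one_right ha
        have hd := Nat.eq_one_of_mul_eq_one_left ha
        exact ⟨⟨hc, hd⟩, hb⟩
      rw [Faux_one]; norm_num
    · set p := N.minFac with hpdef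
      have hp : p.Prime := Nat.minFac_prime hN1
      set a₁ := n₁.factorization p with ha₁
      set a₂ := n₂.factorization p with ha₂
      set a₃ := n₃.factorization p with ha₃
      set m₁ := n₁ / p ^ a₁ with hm₁def
      set m₂ := n₂ / p ^ a₂ with hm₂def
      set m₃ := n₃ / p ^ a₃ with hm₃def
      have e₁ : p ^ a₁ * m₁ = n₁ := Nat.ordProj_mul_ordCompl_eq_self n₁ p
      have e₂ : p ^ a₂ * m₂ = n₂ := Nat.ordProj_mul_ordCompl_eq_self n₂ p
      have e₃ : p ^ a₃ * m₃ = n₃ := Nat.ordProj_mul_ordCompl_eq_self n₃ p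
      have hd₁ : ¬ p ∣ m₁ := Nat.not_dvd_ordCompl hp h₁.ne'
      have hd₂ : ¬ p ∣ m₂ := Nat.not_dvd_ordCompl hp h₂.ne'
      have hd₃ : ¬ p ∣ m₃ := Nat.not_dvd_ordCompl hp h₃.ne'
      have hM₁ : 0 < m₁ := Nat.ordCompl_pos p h₁.ne'
      have hM₂ : 0 < m₂ := Nat.ordCompl_pos p h₂.ne'
      have hM₃ : 0 < m₃ := Nat.ordCompl_pos p h₃.ne'
      have cpM : Nat.Coprime p (m₁ * m₂ * m₃) :=
        (((hp.coprime_iff_not_dvd).2 hd₁).mul_right ((hp.coprime_iff_not_dvd).2 hd₂)).mul_right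
          ((hp.coprime_iff_not_dvd).2 hd₃)
      have cP : Nat.Coprime (p ^ (a₁ + a₂ + a₃)) (m₁ * m₂ * m₃) := cpM.pow_left _
      have cP' : Nat.Coprime (p ^ a₁ * p ^ a₂ * p ^ a₃) (m₁ * m₂ * m₃) := by
        rwa [← pow_add, ← pow_add]
      have keyN : n₁ * n₂ * n₃ = p ^ (a₁ + a₂ + a₃) * (m₁ * m₂ * m₃) := by
        rw [← e₁, ← e₂, ← e₃, pow_add, pow_add]; ring
      have hposS : 0 < a₁ + a₂ + a₃ := by
        have hpN : p ∣ n₁ * n₂ * n₃ := hN ▸ Nat.minFac_dvd N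
        rcases (Nat.Prime.dvd_mul hp).1 hpN with hh | hh
        · rcases (Nat.Prime.dvd_mul hp).1 hh with hh' | hh'
          · have := hp.factorization_pos_of_dvd h₁.ne' hh'; omega
          · have := hp.factorization_pos_of_dvd h₂.ne' hh'; omega
        · have := hp.factorization_pos_of_dvd h₃.ne' hh; omega
      have hlt : m₁ * m₂ * m₃ < N := by
        rw [← hN, keyN]
        have h2 : 2 ≤ p ^ (a₁ + a₂ + a₃) :=
          hp.two_le.trans (Nat.le_self_pow hposS.ne' p)
        have : 0 < m₁ * m₂ * m₃ := by positivity
        nlinarith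
      have ihm := ih (m₁ * m₂ * m₃) hlt m₁ m₂ m₃ hM₁ hM₂ hM₃ rfl
      have hFm : Faux n₁ n₂ n₃ = Faux (p ^ a₁) (p ^ a₂) (p ^ a₃) * Faux m₁ m₂ m₃ := by
        rw [← e₁, ← e₂, ← e₃]
        exact Faux_mul (pow_pos hp.pos _) (pow_pos hp.pos _) (pow_pos hp.pos _) hM₁ hM₂ hM₃ cP'
      rw [hFm, Faux_pp hp, ← ihm, keyN, cP.card_divisors_mul]
      push_cast
      rw [aux_card_divisors_pp hp]
      push_cast
      ring

open ArithmeticFunction in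
theorem stmt1 (n₁ n₂ n₃ : ℕ) (h₁ : 0 < n₁) (h₂ : 0 < n₂) (h₃ : 0 < n₃) :
    ((n₁ * n₂ * n₃).divisors.card : ℚ) =
      ∑ d₁ ∈ (Nat.gcd n₂ n₃).divisors, ∑ d₂ ∈ (Nat.gcd n₁ n₃).divisors,
        ∑ d₃ ∈ (Nat.gcd n₁ n₂).divisors,
          if d₂ * d₃ ∣ n₁ ∧ d₁ * d₃ ∣ n₂ ∧ d₁ * d₂ ∣ n₃ then
            ((moebius (d₁ * d₂) : ℚ) * (moebius d₃ : ℚ) /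
                2 ^ ((Nat.gcd d₁ n₁).primeFactors.card + (Nat.gcd d₂ n₂).primeFactors.card)) *
              (((n₁ / (d₂ * d₃)).divisors.card : ℚ) *
                (((n₂ / (d₁ * d₃)).divisors.card : ℚ) * ((n₃ / (d₁ * d₂)).divisors.card : ℚ)))
          else 0 := by
  exact Faux_key (n₁ * n₂ * n₃) n₁ n₂ n₃ h₁ h₂ h₃ rfl
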